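/- Let P > 0, write p̄ = P/(1+P) and C = (1/2)·log(1+P), let 0 < R < C, and set η = (1−p̄)·exp(2R) = exp(−2(C−R)) ∈ (0,1). Let M : ℤ≥0 × ℤ≥−1 → ℝ satisfy M(r,−1) = 1 for r ≥ 1, M(0,t) = exp(−2R(t+1)) for t ≥ 0, and M(r,t) = p̄·M(r−1,t) + (1−p̄)·M(r,t−1) for r ≥ 1, t ≥ 0. Define E_S(v) = (1/(1−η))·D(1−η‖p̄) + 2R·(1/v − η/(1−η)) for 0 < v ≤ (1−η)/η, E_S(v) = ((1+v)/v)·D(v/(1+v)‖p̄) for (1−η)/η < v ≤ P, and E_S(v) = 0 for v > P. Then for every real v > 0, limsup_{r→∞} (1/r) · log M(r, ⌊r/v⌋) ≤ −E_S(v). -/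

import Mathlib

open Filter

/-- The binary Kullback–Leibler divergence `D(q‖p)` (natural logarithms). -/
noncomputable def klBin (q p : ℝ) : ℝ :=
  q * Real.log (q / p) + (1 - q) * Real.log ((1 - q) / (1 - p))

open Real in
lemma auxInd (p q : ℝ) (hp : 0 ≤ p) (hq : 0 ≤ q) (A B : ℕ → ℤ → ℝ)
    (hrecA : ∀ r : ℕ, 1 ≤ r → ∀ t : ℤ, 0 ≤ t →
      A r t ≤ p * A (r - 1) t + q * A r (t - 1))
    (hrecB : ∀ r : ℕ, 1 ≤ r → ∀ t : ℤ, 0 ≤ t →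
      p * B (r - 1) t + q * B r (t - 1) ≤ B r t)
    (h0 : ∀ t : ℤ, 0 ≤ t → A 0 t ≤ B 0 t)
    (hm1 : ∀ r : ℕ, 1 ≤ r → A r (-1) ≤ B r (-1)) :
    ∀ r : ℕ, ∀ t : ℤ, 0 ≤ t → A r t ≤ B r t := by
  intro r
  induction r with
  | zero => exact h0
  | succ n ih =>
    intro t ht
    refine Int.le_induction (motive := fun s _ => A (n + 1) s ≤ B (n + 1) s) ?_ ?_ t ht
    · have hA := hrecA (n + 1) (by omega) 0 le_rfl
      have hB := hrecB (n + 1) (by omega) 0 le_rfl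
      simp only [Nat.add_sub_cancel] at hA hB
      have h1 : A n 0 ≤ B n 0 := ih 0 le_rfl
      have h2 : A (n + 1) (0 - 1) ≤ B (n + 1) (0 - 1) := by
        norm_num; exact hm1 (n + 1) (by omega)
      calc A (n + 1) 0 ≤ p * A n 0 + q * A (n + 1) (0 - 1) := hA
        _ ≤ p * B n 0 + q * B (n + 1) (0 - 1) := by gcongr
        _ ≤ B (n + 1) 0 := hB
    · intro t ht iht
      have hA := hrecA (n + 1) (by omega) (t + 1) (by omega)
      have hB := hrecB (n + 1) (by omega) (t + 1) (by omega)
      simp only [Nat.add_sub_cancel, add_sub_cancel_right] at hA hB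
      have h1 : A n (t + 1) ≤ B n (t + 1) := ih (t + 1) (by omega)
      calc A (n + 1) (t + 1) ≤ p * A n (t + 1) + q * A (n + 1) t := hA
        _ ≤ p * B n (t + 1) + q * B (n + 1) t := by gcongr
        _ ≤ B (n + 1) (t + 1) := hB

lemma expBound
    (p R η μ lam v : ℝ)
    (hp0 : 0 < p) (hp1 : p < 1) (hR : 0 < R) (hv : 0 < v)
    (hη : η = (1 - p) * Real.exp (2 * R))
    (hμ : 1 ≤ μ) (hlam : 1 ≤ lam)
    (hημ : η < μ) (hplam : p < lam)
    (hc2le : (1 - p) / (1 - p / lam) ≤ 1)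
    (M : ℕ → ℤ → ℝ)
    (hinit : ∀ r : ℕ, 1 ≤ r → M r (-1) = 1)
    (hbound : ∀ t : ℤ, 0 ≤ t → M 0 t = Real.exp (-2 * R * (t + 1)))
    (hrec : ∀ r : ℕ, 1 ≤ r → ∀ t : ℤ, 0 ≤ t →
      M r t = p * M (r - 1) t + (1 - p) * M r (t - 1)) :
    ∀ r : ℕ, 1 ≤ r →
      M r (⌊(r : ℝ) / v⌋₊ : ℤ) ≤
        Real.exp (r * (-(2 * R) / v + Real.log (p / (1 - η / μ)) + (1 / v) * Real.log μ)) +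
        Real.exp (r * (Real.log lam + (1 / v) * Real.log ((1 - p) / (1 - p / lam)))) := by
  have hq0 : (0:ℝ) < 1 - p := by linarith
  have hμ0 : (0:ℝ) < μ := by linarith
  have hlam0 : (0:ℝ) < lam := by linarith
  have hη0 : 0 < η := by
    rw [hη]; positivity
  have hημ' : 0 < 1 - η / μ := by
    rw [sub_pos, div_lt_one hμ0]; exact hημ
  have hplam' : 0 < 1 - p / lam := by
    rw [sub_pos, div_lt_one hlam0]; exact hplam
  set c1 := Real.log (p / (1 - η / μ)) with hc1def
  set m := Real.log μ with hmdef
  set l := Real.log lam with hldef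
  set c2 := Real.log ((1 - p) / (1 - p / lam)) with hc2def
  have hec1 : Real.exp c1 = p / (1 - η / μ) := Real.exp_log (by positivity)
  have hem : Real.exp m = μ := Real.exp_log hμ0
  have hel : Real.exp l = lam := Real.exp_log hlam0
  have hec2 : Real.exp c2 = (1 - p) / (1 - p / lam) := Real.exp_log (by positivity)
  have hm0 : 0 ≤ m := Real.log_nonneg hμ
  have hl0 : 0 ≤ l := Real.log_nonneg hlam
  have hc2np : c2 ≤ 0 := Real.log_nonpos (by positivity) hc2le
  have he2R : Real.exp (2 * R) = η / (1 - p) := by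
    rw [hη]; field_simp
  -- the supersolution
  set F : ℕ → ℤ → ℝ := fun r t =>
    Real.exp (-(2 * R) * ((t : ℝ) + 1) + (r : ℝ) * c1 + (t : ℝ) * m) +
    Real.exp (((r : ℝ) - 1) * l + ((t : ℝ) + 1) * c2) with hFdef
  -- exact recursion for each exponential piece
  have e1 : ∀ x y : ℝ,
      p * Real.exp (-(2 * R) * (y + 1) + (x - 1) * c1 + y * m)
        + (1 - p) * Real.exp (-(2 * R) * ((y - 1) + 1) + x * c1 + (y - 1) * m)
      = Real.exp (-(2 * R) * (y + 1) + x * c1 + y * m) := by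
    have key1 : ∀ E : ℝ, p * Real.exp (E - c1) + (1 - p) * Real.exp (E + (2 * R - m))
        = Real.exp E := by
      intro E
      rw [Real.exp_sub, Real.exp_add, Real.exp_sub, hec1, hem, he2R]
      field_simp
      ring
    intro x y
    rw [show -(2 * R) * (y + 1) + (x - 1) * c1 + y * m
          = (-(2 * R) * (y + 1) + x * c1 + y * m) - c1 by ring,
        show -(2 * R) * ((y - 1) + 1) + x * c1 + (y - 1) * m
          = (-(2 * R) * (y + 1) + x * c1 + y * m) + (2 * R - m) by ring]
    exact key1 _
  have e2 : ∀ x y : ℝ,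
      p * Real.exp ((x - 1 - 1) * l + (y + 1) * c2)
        + (1 - p) * Real.exp ((x - 1) * l + ((y - 1) + 1) * c2)
      = Real.exp ((x - 1) * l + (y + 1) * c2) := by
    have key2 : ∀ E : ℝ, p * Real.exp (E - l) + (1 - p) * Real.exp (E - c2)
        = Real.exp E := by
      intro E
      rw [Real.exp_sub, Real.exp_sub, hel, hec2]
      field_simp
      ring
    intro x y
    rw [show (x - 1 - 1) * l + (y + 1) * c2 = ((x - 1) * l + (y + 1) * c2) - l by ring,
        show (x - 1) * l + ((y - 1) + 1) * c2 = ((x - 1) * l + (y + 1) * c2) - c2 by ring]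
    exact key2 _
  have hMF : ∀ r : ℕ, ∀ t : ℤ, 0 ≤ t → M r t ≤ F r t := by
    refine auxInd p (1 - p) hp0.le hq0.le M F ?_ ?_ ?_ ?_
    · intro r hr t ht
      exact le_of_eq (hrec r hr t ht)
    · intro r hr t ht
      have hcast : ((r - 1 : ℕ) : ℝ) = (r : ℝ) - 1 := by
        have : (1:ℕ) ≤ r := hr
        push_cast [this]
        ring
      simp only [hFdef]
      push_cast
      rw [hcast]
      calc p * (Real.exp (-(2 * R) * ((t:ℝ) + 1) + ((r:ℝ) - 1) * c1 + (t:ℝ) * m)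
              + Real.exp (((r:ℝ) - 1 - 1) * l + ((t:ℝ) + 1) * c2))
            + (1 - p) * (Real.exp (-(2 * R) * (((t:ℝ) - 1) + 1) + (r:ℝ) * c1 + ((t:ℝ) - 1) * m)
              + Real.exp (((r:ℝ) - 1) * l + (((t:ℝ) - 1) + 1) * c2))
          = (p * Real.exp (-(2 * R) * ((t:ℝ) + 1) + ((r:ℝ) - 1) * c1 + (t:ℝ) * m)
              + (1 - p) * Real.exp (-(2 * R) * (((t:ℝ) - 1) + 1) + (r:ℝ) * c1 + ((t:ℝ) - 1) * m))
            + (p * Real.exp (((r:ℝ) - 1 - 1) * l + ((t:ℝ) + 1) * c2)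
              + (1 - p) * Real.exp (((r:ℝ) - 1) * l + (((t:ℝ) - 1) + 1) * c2)) := by ring
        _ = Real.exp (-(2 * R) * ((t:ℝ) + 1) + (r:ℝ) * c1 + (t:ℝ) * m)
            + Real.exp (((r:ℝ) - 1) * l + ((t:ℝ) + 1) * c2) := by
            rw [e1 (r:ℝ) (t:ℝ), e2 (r:ℝ) (t:ℝ)]
        _ ≤ _ := le_refl _
    · intro t ht
      rw [hbound t ht]
      have ht' : (0:ℝ) ≤ (t:ℝ) := by exact_mod_cast ht
      simp only [hFdef]
      push_cast
      have h1 : Real.exp (-2 * R * ((t:ℝ) + 1))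
          ≤ Real.exp (-(2 * R) * ((t:ℝ) + 1) + (0:ℝ) * c1 + (t:ℝ) * m) := by
        apply Real.exp_le_exp.2
        have : 0 ≤ (t:ℝ) * m := mul_nonneg ht' hm0
        linarith
      have h2 : 0 ≤ Real.exp (((0:ℝ) - 1) * l + ((t:ℝ) + 1) * c2) := (Real.exp_pos _).le
      calc Real.exp (-2 * R * ((t:ℝ) + 1))
          ≤ Real.exp (-(2 * R) * ((t:ℝ) + 1) + (0:ℝ) * c1 + (t:ℝ) * m) := h1
        _ ≤ _ := le_add_of_nonneg_right h2
    · intro r hr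
      rw [hinit r hr]
      simp only [hFdef]
      push_cast
      have h2 : (1:ℝ) ≤ Real.exp (((r:ℝ) - 1) * l + ((-1:ℝ) + 1) * c2) := by
        apply Real.one_le_exp
        have hr' : (1:ℝ) ≤ (r:ℝ) := by exact_mod_cast hr
        have : 0 ≤ ((r:ℝ) - 1) * l := mul_nonneg (by linarith) hl0
        nlinarith
      have h1 : 0 ≤ Real.exp (-(2 * R) * ((-1:ℝ) + 1) + (r:ℝ) * c1 + (-1:ℝ) * m) :=
        (Real.exp_pos _).le
      linarith
  -- now specialize to t = ⌊r/v⌋₊ and bound the exponents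
  intro r hr
  have hr' : (1:ℝ) ≤ (r:ℝ) := by exact_mod_cast hr
  set T : ℕ := ⌊(r : ℝ) / v⌋₊ with hTdef
  have hT0 : (0:ℤ) ≤ (T : ℤ) := Int.natCast_nonneg T
  have htle : (T : ℝ) ≤ (r : ℝ) / v := Nat.floor_le (by positivity)
  have htgt : (r : ℝ) / v < (T : ℝ) + 1 := Nat.lt_floor_add_one _
  have hMFr := hMF r (T : ℤ) hT0
  have hF1 : Real.exp (-(2 * R) * ((T:ℝ) + 1) + (r:ℝ) * c1 + (T:ℝ) * m)
      ≤ Real.exp ((r:ℝ) * (-(2 * R) / v + c1 + (1 / v) * m)) := by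
    apply Real.exp_le_exp.2
    have hra : (r:ℝ) * (-(2 * R) / v + c1 + (1 / v) * m)
        = -(2 * R) * ((r:ℝ) / v) + (r:ℝ) * c1 + ((r:ℝ) / v) * m := by ring
    rw [hra]
    have h1 : 2 * R * ((r:ℝ) / v) ≤ 2 * R * ((T:ℝ) + 1) :=
      mul_le_mul_of_nonneg_left htgt.le (by positivity)
    have h2 : (T:ℝ) * m ≤ ((r:ℝ) / v) * m := mul_le_mul_of_nonneg_right htle hm0
    nlinarith
  have hF2 : Real.exp (((r:ℝ) - 1) * l + ((T:ℝ) + 1) * c2)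
      ≤ Real.exp ((r:ℝ) * (l + (1 / v) * c2)) := by
    apply Real.exp_le_exp.2
    have hrb : (r:ℝ) * (l + (1 / v) * c2) = (r:ℝ) * l + ((r:ℝ) / v) * c2 := by ring
    rw [hrb]
    have h1 : ((r:ℝ) - 1) * l ≤ (r:ℝ) * l :=
      mul_le_mul_of_nonneg_right (by linarith) hl0
    have h2 : ((T:ℝ) + 1) * c2 ≤ ((r:ℝ) / v) * c2 :=
      mul_le_mul_of_nonpos_right htgt.le hc2np
    linarith
  have hcast2 : (((T : ℤ) : ℝ)) = (T : ℝ) := by push_cast; ring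
  calc M r (T : ℤ) ≤ F r (T : ℤ) := hMFr
    _ = Real.exp (-(2 * R) * ((T:ℝ) + 1) + (r:ℝ) * c1 + (T:ℝ) * m)
        + Real.exp (((r:ℝ) - 1) * l + ((T:ℝ) + 1) * c2) := by
        simp only [hFdef]; rw [hcast2]
    _ ≤ _ := add_le_add hF1 hF2

lemma auxLimsup (f : ℕ → ℝ) (c c0 K : ℝ)
    (hub : ∀ r : ℕ, 1 ≤ r → f r ≤ c + K / r)
    (hlb : ∀ r : ℕ, 1 ≤ r → c0 ≤ f r) :
    Filter.limsup f atTop ≤ c := by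
  have hev : ∀ᶠ r : ℕ in atTop, f r ≤ c + K / r :=
    eventually_atTop.2 ⟨1, fun r hr => hub r hr⟩
  have hg : Tendsto (fun r : ℕ => c + K / (r : ℝ)) atTop (nhds c) := by
    have := (tendsto_const_div_atTop_nhds_zero_nat K).const_add c
    simpa using this
  have hcob : IsCoboundedUnder (· ≤ ·) atTop f := by
    refine isCoboundedUnder_le_of_eventually_le atTop (x := c0) ?_
    exact eventually_atTop.2 ⟨1, fun r hr => hlb r hr⟩
  calc Filter.limsup f atTop ≤ Filter.limsup (fun r : ℕ => c + K / (r : ℝ)) atTop :=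
        limsup_le_limsup hev hcob hg.isBoundedUnder_le
    _ = c := hg.limsup_eq

lemma upperM (p R : ℝ) (hp0 : 0 < p) (hp1 : p < 1) (hR : 0 < R)
    (M : ℕ → ℤ → ℝ)
    (hinit : ∀ r : ℕ, 1 ≤ r → M r (-1) = 1)
    (hbound : ∀ t : ℤ, 0 ≤ t → M 0 t = Real.exp (-2 * R * (t + 1)))
    (hrec : ∀ r : ℕ, 1 ≤ r → ∀ t : ℤ, 0 ≤ t →
      M r t = p * M (r - 1) t + (1 - p) * M r (t - 1)) :
    ∀ r : ℕ, ∀ t : ℤ, 0 ≤ t → M r t ≤ 1 := by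
  have h := auxInd p (1 - p) hp0.le (by linarith) M (fun _ _ => 1)
    (fun r hr t ht => le_of_eq (hrec r hr t ht))
    (fun r hr t ht => by norm_num)
    (fun t ht => by
      rw [hbound t ht]
      apply Real.exp_le_one_iff.2
      have ht' : (0:ℝ) ≤ (t:ℝ) := by exact_mod_cast ht
      nlinarith)
    (fun r hr => le_of_eq (hinit r hr))
  exact h

lemma lowerM (p R : ℝ) (hp0 : 0 < p) (hp1 : p < 1) (hR : 0 < R)
    (hlogq : Real.log (1 - p) ≤ -(2 * R))
    (M : ℕ → ℤ → ℝ)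
    (hinit : ∀ r : ℕ, 1 ≤ r → M r (-1) = 1)
    (hbound : ∀ t : ℤ, 0 ≤ t → M 0 t = Real.exp (-2 * R * (t + 1)))
    (hrec : ∀ r : ℕ, 1 ≤ r → ∀ t : ℤ, 0 ≤ t →
      M r t = p * M (r - 1) t + (1 - p) * M r (t - 1)) :
    ∀ r : ℕ, ∀ t : ℤ, 0 ≤ t →
      Real.exp (((t : ℝ) + 1) * Real.log (1 - p)) ≤ M r t := by
  have hq0 : (0:ℝ) < 1 - p := by linarith
  have heL : Real.exp (Real.log (1 - p)) = 1 - p := Real.exp_log hq0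
  refine auxInd p (1 - p) hp0.le (by linarith)
    (fun _ t => Real.exp (((t : ℝ) + 1) * Real.log (1 - p))) M ?_ ?_ ?_ ?_
  · intro r hr t ht
    push_cast
    have key : (1 - p) * Real.exp ((((t : ℝ) - 1) + 1) * Real.log (1 - p))
        = Real.exp (((t : ℝ) + 1) * Real.log (1 - p)) := by
      rw [show (((t : ℝ) - 1) + 1) * Real.log (1 - p)
            = ((t : ℝ) + 1) * Real.log (1 - p) - Real.log (1 - p) by ring,
        Real.exp_sub, heL]
      field_simp
    have hpe : 0 ≤ p * Real.exp (((t : ℝ) + 1) * Real.log (1 - p)) := by positivity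
    linarith [key]
  · intro r hr t ht
    exact le_of_eq (hrec r hr t ht).symm
  · intro t ht
    rw [hbound t ht]
    apply Real.exp_le_exp.2
    have ht' : (0:ℝ) ≤ (t:ℝ) := by exact_mod_cast ht
    nlinarith
  · intro r hr
    rw [hinit r hr]
    push_cast
    norm_num


set_option maxHeartbeats 1600000

/-- Theorem 4 of the paper: streaming MSE exponent.
Let `P > 0`, `p̄ = P/(1+P)`, `C = (1/2)log(1+P)`, `0 < R < C`,
`η = (1−p̄)·exp(2R) = exp(−2(C−R)) ∈ (0,1)`. Let `M` satisfy `M(r,−1) = 1` for `r ≥ 1`,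
`M(0,t) = exp(−2R(t+1))` for `t ≥ 0`, and
`M(r,t) = p̄·M(r−1,t) + (1−p̄)·M(r,t−1)` for `r ≥ 1`, `t ≥ 0`. With
`E_S(v) = (1/(1−η))·D(1−η‖p̄) + 2R·(1/v − η/(1−η))` for `0 < v ≤ (1−η)/η`,
`E_S(v) = ((1+v)/v)·D(v/(1+v)‖p̄)` for `(1−η)/η < v ≤ P`, and `E_S(v) = 0` for `v > P`,
we have, for every `v > 0`,
`limsup_{r→∞} (1/r)·log M(r,⌊r/v⌋) ≤ −E_S(v)`. -/
theorem stmt11 (P : ℝ) (hP : 0 < P) (R : ℝ) (hR0 : 0 < R)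
    (hRC : R < (1 / 2) * Real.log (1 + P))
    (η : ℝ) (hη : η = (1 - P / (1 + P)) * Real.exp (2 * R))
    (M : ℕ → ℤ → ℝ)
    (hinit : ∀ r : ℕ, 1 ≤ r → M r (-1) = 1)
    (hbound : ∀ t : ℤ, 0 ≤ t → M 0 t = Real.exp (-2 * R * (t + 1)))
    (hrec : ∀ r : ℕ, 1 ≤ r → ∀ t : ℤ, 0 ≤ t →
      M r t = (P / (1 + P)) * M (r - 1) t + (1 - P / (1 + P)) * M r (t - 1)) :
    ∀ v : ℝ, 0 < v →
      Filter.limsup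
          (fun r : ℕ => (1 / (r : ℝ)) * Real.log (M r (⌊(r : ℝ) / v⌋₊ : ℤ))) atTop ≤
        -(if v ≤ (1 - η) / η then
            (1 / (1 - η)) * klBin (1 - η) (P / (1 + P)) + 2 * R * (1 / v - η / (1 - η))
          else if v ≤ P then
            ((1 + v) / v) * klBin (v / (1 + v)) (P / (1 + P))
          else 0) := by
  intro v hv
  have hP1 : (0:ℝ) < 1 + P := by linarith
  set p : ℝ := P / (1 + P) with hpdef
  have hpP : p * (1 + P) = P := by rw [hpdef]; field_simp
  have hp0 : 0 < p := by rw [hpdef]; positivity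
  have hp1 : p < 1 := by rw [hpdef, div_lt_one hP1]; linarith
  have hq0 : (0:ℝ) < 1 - p := by linarith
  have hqP : (1 - p) * (1 + P) = 1 := by linear_combination -hpP
  have hexp2R : Real.exp (2 * R) < 1 + P := by
    have h2 : 2 * R < Real.log (1 + P) := by linarith
    calc Real.exp (2 * R) < Real.exp (Real.log (1 + P)) := Real.exp_lt_exp.2 h2
      _ = 1 + P := Real.exp_log hP1
  have hη0 : 0 < η := by
    rw [hη]; exact mul_pos hq0 (Real.exp_pos _)
  have hη1 : η < 1 := by
    rw [hη]; nlinarith [hqP, hexp2R, hq0]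
  have hη1' : (0:ℝ) < 1 - η := by linarith
  have hone2R : (1:ℝ) ≤ Real.exp (2 * R) := Real.one_le_exp (by linarith)
  have hlogq : Real.log (1 - p) ≤ -(2 * R) := by
    have h2 : (1 - p) * Real.exp (2 * R) ≤ 1 := by rw [← hη]; linarith
    have h1 : 1 - p ≤ Real.exp (-(2 * R)) := by
      rw [Real.exp_neg]
      have he : (0:ℝ) < Real.exp (2 * R) := Real.exp_pos _
      calc 1 - p = (1 - p) * Real.exp (2 * R) * (Real.exp (2 * R))⁻¹ := by field_simp
        _ ≤ 1 * (Real.exp (2 * R))⁻¹ := by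
            apply mul_le_mul_of_nonneg_right h2 (by positivity)
        _ = (Real.exp (2 * R))⁻¹ := one_mul _
    calc Real.log (1 - p) ≤ Real.log (Real.exp (-(2 * R))) := Real.log_le_log hq0 h1
      _ = -(2 * R) := Real.log_exp _
  have hup := upperM p R hp0 hp1 hR0 M hinit hbound hrec
  have hlow := lowerM p R hp0 hp1 hR0 hlogq M hinit hbound hrec
  have hMpos : ∀ r : ℕ, ∀ t : ℤ, 0 ≤ t → 0 < M r t := fun r t ht =>
    lt_of_lt_of_le (Real.exp_pos _) (hlow r t ht)
  have hL0 : Real.log (1 - p) ≤ 0 := Real.log_nonpos hq0.le (by linarith)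
  set c0 : ℝ := (1 / v + 1) * Real.log (1 - p) with hc0def
  -- lower bound on the sequence
  have hlb : ∀ r : ℕ, 1 ≤ r →
      c0 ≤ (1 / (r : ℝ)) * Real.log (M r (⌊(r : ℝ) / v⌋₊ : ℤ)) := by
    intro r hr
    have hr' : (1:ℝ) ≤ (r:ℝ) := by exact_mod_cast hr
    have hr0 : (0:ℝ) < (r:ℝ) := by linarith
    have htle : ((⌊(r : ℝ) / v⌋₊ : ℕ) : ℝ) ≤ (r : ℝ) / v :=
      Nat.floor_le (div_nonneg hr0.le hv.le)
    have hMl := hlow r (⌊(r : ℝ) / v⌋₊ : ℤ) (Int.natCast_nonneg _)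
    have hcast : (((⌊(r : ℝ) / v⌋₊ : ℤ) : ℝ)) = ((⌊(r : ℝ) / v⌋₊ : ℕ) : ℝ) := by
      push_cast; ring
    rw [hcast] at hMl
    have hlogM : (((⌊(r : ℝ) / v⌋₊ : ℕ) : ℝ) + 1) * Real.log (1 - p)
        ≤ Real.log (M r (⌊(r : ℝ) / v⌋₊ : ℤ)) := by
      have := Real.log_le_log (Real.exp_pos _) hMl
      rwa [Real.log_exp] at this
    have h2 : (r : ℝ) * (1 / v + 1) * Real.log (1 - p)
        ≤ (((⌊(r : ℝ) / v⌋₊ : ℕ) : ℝ) + 1) * Real.log (1 - p) := by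
      apply mul_le_mul_of_nonpos_right ?_ hL0
      have hdv : (r:ℝ) / v = (r:ℝ) * (1 / v) := by ring
      nlinarith [htle]
    have h3 : c0 = (1 / (r:ℝ)) * ((r : ℝ) * (1 / v + 1) * Real.log (1 - p)) := by
      rw [hc0def]; field_simp
    rw [h3]
    exact mul_le_mul_of_nonneg_left (le_trans h2 hlogM) (by positivity)
  -- main reduction
  have main : ∀ μ lam c : ℝ, 1 ≤ μ → 1 ≤ lam → η < μ → p < lam →
      (1 - p) / (1 - p / lam) ≤ 1 →
      -(2 * R) / v + Real.log (p / (1 - η / μ)) + (1 / v) * Real.log μ ≤ c →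
      Real.log lam + (1 / v) * Real.log ((1 - p) / (1 - p / lam)) ≤ c →
      Filter.limsup
          (fun r : ℕ => (1 / (r : ℝ)) * Real.log (M r (⌊(r : ℝ) / v⌋₊ : ℤ))) atTop ≤ c := by
    intro μ lam c hμ hlam hημ hplam hc2le hAc hBc
    refine auxLimsup _ c c0 (Real.log 2) ?_ hlb
    intro r hr
    have hr' : (1:ℝ) ≤ (r:ℝ) := by exact_mod_cast hr
    have hr0 : (0:ℝ) < (r:ℝ) := by linarith
    have hEB := expBound p R η μ lam v hp0 hp1 hR0 hv hη hμ hlam hημ hplam hc2le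
      M hinit hbound hrec r hr
    have hA' : Real.exp ((r:ℝ) * (-(2 * R) / v + Real.log (p / (1 - η / μ))
          + (1 / v) * Real.log μ)) ≤ Real.exp ((r:ℝ) * c) :=
      Real.exp_le_exp.2 (mul_le_mul_of_nonneg_left hAc hr0.le)
    have hB' : Real.exp ((r:ℝ) * (Real.log lam
          + (1 / v) * Real.log ((1 - p) / (1 - p / lam)))) ≤ Real.exp ((r:ℝ) * c) :=
      Real.exp_le_exp.2 (mul_le_mul_of_nonneg_left hBc hr0.le)
    have hM2 : M r (⌊(r : ℝ) / v⌋₊ : ℤ) ≤ 2 * Real.exp ((r:ℝ) * c) := by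
      calc M r (⌊(r : ℝ) / v⌋₊ : ℤ)
          ≤ Real.exp ((r:ℝ) * (-(2 * R) / v + Real.log (p / (1 - η / μ))
              + (1 / v) * Real.log μ))
            + Real.exp ((r:ℝ) * (Real.log lam
              + (1 / v) * Real.log ((1 - p) / (1 - p / lam)))) := hEB
        _ ≤ Real.exp ((r:ℝ) * c) + Real.exp ((r:ℝ) * c) := add_le_add hA' hB'
        _ = 2 * Real.exp ((r:ℝ) * c) := by ring
    have hMp : 0 < M r (⌊(r : ℝ) / v⌋₊ : ℤ) := hMpos r _ (Int.natCast_nonneg _)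
    have hlog1 : Real.log (M r (⌊(r : ℝ) / v⌋₊ : ℤ))
        ≤ Real.log (2 * Real.exp ((r:ℝ) * c)) := Real.log_le_log hMp hM2
    rw [Real.log_mul two_ne_zero (Real.exp_ne_zero _), Real.log_exp] at hlog1
    have h4 : (1 / (r:ℝ)) * Real.log (M r (⌊(r : ℝ) / v⌋₊ : ℤ))
        ≤ (1 / (r:ℝ)) * (Real.log 2 + (r:ℝ) * c) :=
      mul_le_mul_of_nonneg_left hlog1 (by positivity)
    have h5 : (1 / (r:ℝ)) * (Real.log 2 + (r:ℝ) * c) = c + Real.log 2 / (r:ℝ) := by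
      field_simp; ring
    calc (1 / (r:ℝ)) * Real.log (M r (⌊(r : ℝ) / v⌋₊ : ℤ))
        ≤ (1 / (r:ℝ)) * (Real.log 2 + (r:ℝ) * c) := h4
      _ = c + Real.log 2 / (r:ℝ) := h5
  by_cases hcA : v ≤ (1 - η) / η
  · -- small v regime
    rw [if_pos hcA]
    have hηP : η * (1 + P) = Real.exp (2 * R) := by
      rw [hη]; linear_combination Real.exp (2 * R) * hqP
    have hvP : v ≤ P := by
      have h2 : (1 - η) / η ≤ P := by
        rw [div_le_iff₀ hη0]; nlinarith [hηP, hone2R]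
      linarith
    set lam : ℝ := p * (1 + v) / v with hlamdef
    have hlam1 : 1 ≤ lam := by
      rw [hlamdef, le_div_iff₀ hv]
      have key : p * (1 + v) * (1 + P) = P * (1 + v) := by linear_combination (1 + v) * hpP
      nlinarith [key]
    have hplam : p < lam := by
      rw [hlamdef, lt_div_iff₀ hv]
      nlinarith
    have h1v : (0:ℝ) < 1 + v := by linarith
    have hplamv : p / lam = v / (1 + v) := by
      rw [hlamdef, div_div_eq_mul_div]
      exact mul_div_mul_left _ _ (ne_of_gt hp0)
    have hfrac : 1 - p / lam = 1 / (1 + v) := by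
      rw [hplamv, eq_div_iff (ne_of_gt h1v), sub_mul, div_mul_cancel₀ _ (ne_of_gt h1v)]
      ring
    have hc2eq : (1 - p) / (1 - p / lam) = (1 - p) * (1 + v) := by
      rw [hfrac, div_div_eq_mul_div, div_one]
    have hc2le : (1 - p) / (1 - p / lam) ≤ 1 := by
      rw [hc2eq]; nlinarith [mul_nonneg hq0.le (sub_nonneg.2 hvP), hqP]
    have hklA : klBin (1 - η) p = (1 - η) * (Real.log (1 - η) - Real.log p) + η * (2 * R) := by
      simp only [klBin]
      rw [show (1:ℝ) - (1 - η) = η by ring]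
      rw [Real.log_div (ne_of_gt hη1') (ne_of_gt hp0)]
      have h6 : η / (1 - p) = Real.exp (2 * R) := by rw [hη]; field_simp
      rw [h6, Real.log_exp]
    have hAeq : -(2 * R) / v + Real.log (p / (1 - η / 1)) + (1 / v) * Real.log 1
        = -((1 / (1 - η)) * klBin (1 - η) p + 2 * R * (1 / v - η / (1 - η))) := by
      rw [div_one, Real.log_one, mul_zero, add_zero,
        Real.log_div (ne_of_gt hp0) (ne_of_gt hη1'), hklA]
      field_simp
      ring
    have hsplit1 : Real.log lam
        = (Real.log p - Real.log (1 - η)) + Real.log ((1 + v) * (1 - η) / v) := by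
      rw [← Real.log_div (ne_of_gt hp0) (ne_of_gt hη1'),
        ← Real.log_mul (by positivity) (by positivity)]
      congr 1
      rw [hlamdef]
      field_simp
    have hsplit2 : Real.log ((1 - p) * (1 + v)) = Real.log (η * (1 + v)) - 2 * R := by
      have h1 : (1 - p) * (1 + v) = (η * (1 + v)) * Real.exp (-(2 * R)) := by
        rw [hη, Real.exp_neg]
        field_simp
      rw [h1, Real.log_mul (by positivity) (Real.exp_ne_zero _), Real.log_exp]
      ring
    have hlog1 : Real.log (η * (1 + v)) ≤ η * (1 + v) - 1 :=
      Real.log_le_sub_one_of_pos (by positivity)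
    have hlog2 : Real.log ((1 + v) * (1 - η) / v) ≤ (1 + v) * (1 - η) / v - 1 :=
      Real.log_le_sub_one_of_pos (by positivity)
    have hzero : ((1 + v) * (1 - η) / v - 1) + (1 / v) * (η * (1 + v) - 1) = 0 := by
      field_simp
      ring
    have hBA : Real.log lam + (1 / v) * Real.log ((1 - p) / (1 - p / lam))
        ≤ -(2 * R) / v + Real.log (p / (1 - η / 1)) + (1 / v) * Real.log 1 := by
      rw [div_one, Real.log_one, mul_zero, add_zero,
        Real.log_div (ne_of_gt hp0) (ne_of_gt hη1'), hc2eq, hsplit1, hsplit2]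
      have h5 : (1 / v) * Real.log (η * (1 + v)) ≤ (1 / v) * (η * (1 + v) - 1) :=
        mul_le_mul_of_nonneg_left hlog1 (by positivity)
      have hXY : Real.log ((1 + v) * (1 - η) / v) + 1 / v * Real.log (η * (1 + v)) ≤ 0 := by
        linarith [hlog2, h5, hzero]
      have hdiff : (Real.log p - Real.log (1 - η) + Real.log ((1 + v) * (1 - η) / v)
            + 1 / v * (Real.log (η * (1 + v)) - 2 * R))
          - (-(2 * R) / v + (Real.log p - Real.log (1 - η)))
          = Real.log ((1 + v) * (1 - η) / v) + 1 / v * Real.log (η * (1 + v)) := by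
        ring
      linarith [hXY, hdiff]
    exact main 1 lam _ le_rfl hlam1 hη1 hplam hc2le (le_of_eq hAeq) (hBA.trans (le_of_eq hAeq))
  · by_cases hcB : v ≤ P
    · -- intermediate regime
      rw [if_neg hcA, if_pos hcB]
      have hcA' : (1 - η) / η < v := not_le.1 hcA
      have h1v : (0:ℝ) < 1 + v := by linarith
      set μ : ℝ := η * (1 + v) with hμdef
      have hμ1 : 1 ≤ μ := by
        rw [hμdef]
        have := (div_lt_iff₀ hη0).1 hcA'
        nlinarith
      have hημ : η < μ := by rw [hμdef]; nlinarith
      have hfracμ : 1 - η / μ = v / (1 + v) := by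
        rw [hμdef]
        field_simp
        ring
      set lam : ℝ := p * (1 + v) / v with hlamdef
      have hlam1 : 1 ≤ lam := by
        rw [hlamdef, le_div_iff₀ hv]
        have key : p * (1 + v) * (1 + P) = P * (1 + v) := by linear_combination (1 + v) * hpP
        nlinarith [key]
      have hplam : p < lam := by
        rw [hlamdef, lt_div_iff₀ hv]
        nlinarith
      have hplamv : p / lam = v / (1 + v) := by
        rw [hlamdef, div_div_eq_mul_div]
        exact mul_div_mul_left _ _ (ne_of_gt hp0)
      have hfrac : 1 - p / lam = 1 / (1 + v) := by
        rw [hplamv, eq_div_iff (ne_of_gt h1v), sub_mul, div_mul_cancel₀ _ (ne_of_gt h1v)]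
        ring
      have hc2eq : (1 - p) / (1 - p / lam) = (1 - p) * (1 + v) := by
        rw [hfrac, div_div_eq_mul_div, div_one]
      have hc2le : (1 - p) / (1 - p / lam) ≤ 1 := by
        rw [hc2eq]; nlinarith [mul_nonneg hq0.le (sub_nonneg.2 hcB), hqP]
      have hlogμ : Real.log μ = Real.log (1 - p) + 2 * R + Real.log (1 + v) := by
        rw [hμdef, hη, Real.log_mul (by positivity) (ne_of_gt h1v),
          Real.log_mul (ne_of_gt hq0) (Real.exp_ne_zero _), Real.log_exp]
      have hlogPμ : Real.log (p / (v / (1 + v)))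
          = Real.log p - (Real.log v - Real.log (1 + v)) := by
        rw [Real.log_div (ne_of_gt hp0) (by positivity),
          Real.log_div (ne_of_gt hv) (ne_of_gt h1v)]
      have hloglam : Real.log lam = Real.log p + Real.log (1 + v) - Real.log v := by
        rw [hlamdef, Real.log_div (by positivity) (ne_of_gt hv),
          Real.log_mul (ne_of_gt hp0) (ne_of_gt h1v)]
      have hlogc2 : Real.log ((1 - p) * (1 + v)) = Real.log (1 - p) + Real.log (1 + v) :=
        Real.log_mul (ne_of_gt hq0) (ne_of_gt h1v)
      have hklB : klBin (v / (1 + v)) p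
          = (v / (1 + v)) * (Real.log v - Real.log (1 + v) - Real.log p)
            + (1 / (1 + v)) * (-Real.log (1 + v) - Real.log (1 - p)) := by
        simp only [klBin]
        rw [show (1:ℝ) - v / (1 + v) = 1 / (1 + v) by field_simp; ring]
        rw [Real.log_div (by positivity) (ne_of_gt hp0),
          Real.log_div (ne_of_gt hv) (ne_of_gt h1v),
          Real.log_div (by positivity) (ne_of_gt hq0),
          Real.log_div one_ne_zero (ne_of_gt h1v), Real.log_one]
        ring
      have hAeq : -(2 * R) / v + Real.log (p / (1 - η / μ)) + (1 / v) * Real.log μ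
          = -(((1 + v) / v) * klBin (v / (1 + v)) p) := by
        rw [hfracμ, hlogPμ, hlogμ, hklB]
        field_simp
        ring
      have hBeq : Real.log lam + (1 / v) * Real.log ((1 - p) / (1 - p / lam))
          = -(((1 + v) / v) * klBin (v / (1 + v)) p) := by
        rw [hc2eq, hloglam, hlogc2, hklB]
        field_simp
        ring
      exact main μ lam _ hμ1 hlam1 hημ hplam hc2le (le_of_eq hAeq) (le_of_eq hBeq)
    · -- large v regime
      rw [if_neg hcA, if_neg hcB, neg_zero]
      refine auxLimsup _ 0 c0 0 ?_ hlb
      intro r hr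
      have hlognp : Real.log (M r (⌊(r : ℝ) / v⌋₊ : ℤ)) ≤ 0 :=
        Real.log_nonpos (hMpos r _ (Int.natCast_nonneg _)).le (hup r _ (Int.natCast_nonneg _))
      have h1 : (1 / (r:ℝ)) * Real.log (M r (⌊(r : ℝ) / v⌋₊ : ℤ)) ≤ (1 / (r:ℝ)) * 0 :=
        mul_le_mul_of_nonneg_left hlognp (by positivity)
      have h2 : (0:ℝ) + 0 / (r:ℝ) = 0 := by norm_num
      rw [h2]
      linarith [h1]
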